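/- Define φ(x) = (sin(πx)/(2x))² for x ≠ 0 and φ(0) = π²/4. Then φ(x) ≥ 1 for all real x with |x| ≤ 1/2, and the Fourier transform of φ is φ̂(s) = (π²/4)·max(1 − |s|, 0). -/

import Mathlib

open Real MeasureTheory FourierTransform intervalIntegral

/-- φ(x) = (sin(πx)/(2x))² for x ≠ 0, φ(0) = π²/4. -/
noncomputable def phiFejer (x : ℝ) : ℝ :=
  if x = 0 then Real.pi ^ 2 / 4 else (Real.sin (Real.pi * x) / (2 * x)) ^ 2

lemma exp_poly_integral (γ α β : ℂ) (hγ : γ ≠ 0) (a b : ℝ) :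
    ∫ v in a..b, (α + β * v) * Complex.exp (γ * v) =
      ((α + β*b)/γ - β/γ^2) * Complex.exp (γ*b) - ((α + β*a)/γ - β/γ^2) * Complex.exp (γ*a) := by
  have key : ∀ v : ℝ, HasDerivAt (fun w : ℝ => ((α + β*w)/γ - β/γ^2) * Complex.exp (γ*w))
      ((α + β*v) * Complex.exp (γ*v)) v := by
    intro v
    have hexp : HasDerivAt (fun w : ℝ => Complex.exp (γ * w)) (γ * Complex.exp (γ*v)) v := by
      have h1 : HasDerivAt (fun z : ℂ => Complex.exp (γ * z)) (Complex.exp (γ*v) * γ) (v:ℂ) :=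
        by simpa using ((hasDerivAt_id (v:ℂ)).const_mul γ).cexp
      simpa [mul_comm] using h1.comp_ofReal
    have hu : HasDerivAt (fun w : ℝ => (α + β*(w:ℂ))/γ - β/γ^2) (β/γ) v := by
      have h2 : HasDerivAt (fun w : ℝ => ((w : ℂ))) 1 v := by
        simpa using (hasDerivAt_id v).ofReal_comp
      simpa using (((h2.const_mul β).const_add α).div_const γ).sub_const (β/γ^2)
    have := hu.mul hexp
    refine this.congr_deriv ?_
    field_simp
    ring
  rw [intervalIntegral.integral_eq_sub_of_hasDerivAt (fun v _ => key v)]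
  exact (Continuous.intervalIntegrable (by continuity) _ _)

noncomputable def triC (t : ℝ) : ℂ := ((max (1 - |t|) 0 : ℝ) : ℂ)

lemma triC_cont : Continuous triC :=
  Complex.continuous_ofReal.comp ((continuous_const.sub continuous_abs).max continuous_const)

lemma triC_zero {t : ℝ} (ht : 1 ≤ |t|) : triC t = 0 := by
  simp [triC, max_eq_right, (by linarith : (1:ℝ) - |t| ≤ 0)]

lemma triC_left {t : ℝ} (h1 : -1 ≤ t) (h2 : t ≤ 0) : triC t = 1 + t := by
  rw [triC, abs_of_nonpos h2, max_eq_left (by linarith)]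
  push_cast; ring

lemma triC_right {t : ℝ} (h1 : 0 ≤ t) (h2 : t ≤ 1) : triC t = 1 - t := by
  rw [triC, abs_of_nonneg h1, max_eq_left (by linarith)]
  push_cast; ring

lemma triC_supp (g : ℝ → ℂ) : Function.support (fun v => g v • triC v) ⊆ Set.Ioc (-1:ℝ) 1 := by
  intro v hv
  simp only [Function.mem_support, ne_eq] at hv
  by_contra hmem
  simp only [Set.mem_Ioc, not_and_or, not_lt, not_le] at hmem
  have : (1:ℝ) ≤ |v| := by
    rcases hmem with h | h
    · calc (1:ℝ) ≤ -v := by linarith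
        _ ≤ |v| := neg_le_abs v
    · exact le_trans (le_of_lt h) (le_abs_self v)
  exact hv (by rw [triC_zero this, smul_zero])

lemma fourier_triC (x : ℝ) :
    𝓕 triC x = ((4 / Real.pi ^ 2) * phiFejer x : ℝ) := by
  rw [Real.fourier_real_eq_integral_exp_smul]
  rw [← intervalIntegral.integral_eq_integral_of_support_subset (triC_supp _)]
  have hcont : Continuous (fun v : ℝ => Complex.exp (↑(-2 * π * v * x) * Complex.I) • triC v) := by
    apply Continuous.smul (f := fun v : ℝ => Complex.exp (↑(-2 * π * v * x) * Complex.I)) _ triC_cont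
    exact Complex.continuous_exp.comp (by continuity)
  rw [← intervalIntegral.integral_add_adjacent_intervals (a := (-1:ℝ)) (b := 0) (c := 1)
    (hcont.intervalIntegrable _ _) (hcont.intervalIntegrable _ _)]
  rcases eq_or_ne x 0 with rfl | hx
  · -- x = 0
    have e1 : ∫ v in (-1:ℝ)..0, Complex.exp (↑(-2 * π * v * 0) * Complex.I) • triC v
        = ∫ v in (-1:ℝ)..0, ((1 + v : ℝ) : ℂ) := by
      apply intervalIntegral.integral_congr
      intro v hv
      rw [Set.uIcc_of_le (by norm_num : (-1:ℝ) ≤ 0)] at hv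
      simp only [mul_zero, Complex.ofReal_zero, zero_mul, Complex.exp_zero, one_smul]
      rw [triC_left hv.1 hv.2]; push_cast; ring
    have e2 : ∫ v in (0:ℝ)..1, Complex.exp (↑(-2 * π * v * 0) * Complex.I) • triC v
        = ∫ v in (0:ℝ)..1, ((1 - v : ℝ) : ℂ) := by
      apply intervalIntegral.integral_congr
      intro v hv
      rw [Set.uIcc_of_le (by norm_num : (0:ℝ) ≤ 1)] at hv
      simp only [mul_zero, Complex.ofReal_zero, zero_mul, Complex.exp_zero, one_smul]
      rw [triC_right hv.1 hv.2]; push_cast; ring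
    rw [e1, e2, intervalIntegral.integral_ofReal, intervalIntegral.integral_ofReal]
    have r1 : (∫ v in (-1:ℝ)..0, (1 + v)) = 1/2 := by
      rw [_root_.intervalIntegral.integral_add (intervalIntegrable_const) (intervalIntegrable_id)]
      simp [integral_id]
      norm_num
    have r2 : (∫ v in (0:ℝ)..1, (1 - v)) = 1/2 := by
      rw [_root_.intervalIntegral.integral_sub (intervalIntegrable_const) (intervalIntegrable_id)]
      simp [integral_id]
      norm_num
    rw [r1, r2, phiFejer, if_pos rfl]
    have hπc : (π:ℂ) ≠ 0 := by exact_mod_cast Real.pi_ne_zero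
    push_cast
    field_simp
    norm_num
  · -- x ≠ 0
    set γ : ℂ := ↑(-2 * π * x) * Complex.I with hγdef
    clear_value γ
    have hπ : (π:ℝ) ≠ 0 := Real.pi_ne_zero
    have hγ : γ ≠ 0 := by
      have hr : (-2 * π * x : ℝ) ≠ 0 :=
        mul_ne_zero (mul_ne_zero (by norm_num) Real.pi_ne_zero) hx
      rw [hγdef]
      exact mul_ne_zero (Complex.ofReal_ne_zero.2 hr) Complex.I_ne_zero
    have e1 : ∫ v in (-1:ℝ)..0, Complex.exp (↑(-2 * π * v * x) * Complex.I) • triC v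
        = ∫ v in (-1:ℝ)..0, ((1:ℂ) + 1 * v) * Complex.exp (γ * v) := by
      apply intervalIntegral.integral_congr
      intro v hv
      rw [Set.uIcc_of_le (by norm_num : (-1:ℝ) ≤ 0)] at hv
      show Complex.exp (↑(-2 * π * v * x) * Complex.I) • triC v = ((1:ℂ) + 1 * v) * Complex.exp (γ * v)
      rw [show (↑(-2 * π * v * x) * Complex.I) = γ * v by rw [hγdef]; push_cast; ring]
      rw [triC_left hv.1 hv.2, smul_eq_mul]
      push_cast; ring
    have e2 : ∫ v in (0:ℝ)..1, Complex.exp (↑(-2 * π * v * x) * Complex.I) • triC v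
        = ∫ v in (0:ℝ)..1, ((1:ℂ) + (-1) * v) * Complex.exp (γ * v) := by
      apply intervalIntegral.integral_congr
      intro v hv
      rw [Set.uIcc_of_le (by norm_num : (0:ℝ) ≤ 1)] at hv
      show Complex.exp (↑(-2 * π * v * x) * Complex.I) • triC v = ((1:ℂ) + (-1) * v) * Complex.exp (γ * v)
      rw [show (↑(-2 * π * v * x) * Complex.I) = γ * v by rw [hγdef]; push_cast; ring]
      rw [triC_right hv.1 hv.2, smul_eq_mul]
      push_cast; ring
    rw [e1, e2, exp_poly_integral γ 1 1 hγ, exp_poly_integral γ 1 (-1) hγ]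
    -- collapse to (exp γ + exp (-γ) - 2)/γ²
    have collapse : (( (1:ℂ) + 1*(0:ℝ))/γ - 1/γ^2) * Complex.exp (γ*(0:ℝ)) -
        (((1:ℂ) + 1*(-1:ℝ))/γ - 1/γ^2) * Complex.exp (γ*(-1:ℝ)) +
        ((((1:ℂ) + (-1)*(1:ℝ))/γ - (-1)/γ^2) * Complex.exp (γ*(1:ℝ)) -
        (((1:ℂ) + (-1)*(0:ℝ))/γ - (-1)/γ^2) * Complex.exp (γ*(0:ℝ)))
        = (Complex.exp γ + Complex.exp (-γ) - 2)/γ^2 := by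
      have z0 : γ * ((0:ℝ):ℂ) = 0 := by norm_num
      have z1 : γ * ((1:ℝ):ℂ) = γ := by norm_num
      have zm : γ * ((-1:ℝ):ℂ) = -γ := by norm_num
      rw [z0, z1, zm, Complex.exp_zero]
      field_simp [hγ]
      push_cast
      ring
    push_cast at collapse ⊢
    rw [collapse]
    -- exp γ + exp (-γ) = 2 cos (2πx)
    have hcos : Complex.exp γ + Complex.exp (-γ) = 2 * Real.cos (2*π*x) := by
      have h1 : γ = ((-(2*π*x):ℝ):ℂ) * Complex.I := by rw [hγdef]; push_cast; ring
      rw [h1, show -((((-(2*π*x)):ℝ):ℂ) * Complex.I) = (((2*π*x):ℝ):ℂ) * Complex.I by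
        push_cast; ring]
      rw [Complex.exp_mul_I, Complex.exp_mul_I, ← Complex.ofReal_cos, ← Complex.ofReal_cos,
        ← Complex.ofReal_sin, ← Complex.ofReal_sin, Real.cos_neg, Real.sin_neg]
      push_cast
      ring
    rw [hcos]
    have hγsq : γ^2 = -(((2*π*x:ℝ):ℂ))^2 := by
      rw [hγdef, mul_pow, Complex.I_sq]; push_cast; ring
    rw [hγsq, phiFejer, if_neg hx]
    -- goal: (2 cos(2πx) - 2)/ -(2πx)² = ↑(4/π² * (sin(πx)/(2x))²)
    have hreal : (2 * Real.cos (2*π*x) - 2) / (-((2*π*x)^2)) = 4/π^2 * (Real.sin (π*x)/(2*x))^2 := by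
      have hc : Real.cos (2*π*x) = 1 - 2 * Real.sin (π*x)^2 := by
        rw [show 2*π*x = 2*(π*x) by ring, Real.cos_two_mul]
        nlinarith [Real.sin_sq_add_cos_sq (π*x)]
      rw [hc]
      field_simp
      ring
    have hc2 := congrArg (Complex.ofReal) hreal
    push_cast at hc2 ⊢
    linear_combination hc2

lemma phiFejer_nonneg (x : ℝ) : 0 ≤ phiFejer x := by
  rw [phiFejer]; split
  · positivity
  · positivity

lemma phiFejer_le (x : ℝ) : phiFejer x ≤ π^2/2 * (1 + x^2)⁻¹ := by
  have hπ : 0 < π := Real.pi_pos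
  rw [← mul_inv_le_iff₀ (by positivity), mul_comm (phiFejer x)]
  rw [inv_inv]
  rcases le_or_gt (x^2) 1 with h | h
  · have hb1 : phiFejer x ≤ π^2/4 := by
      rw [phiFejer]; split
      · linarith
      · rename_i hx
        have h1 : Real.sin (π*x)^2 ≤ (π*x)^2 := Real.sin_sq_le_sq
        rw [div_pow, div_le_div_iff₀ (by positivity) (by norm_num)]
        nlinarith
    nlinarith [phiFejer_nonneg x]
  · have hx : x ≠ 0 := by intro h0; rw [h0] at h; norm_num at h
    have hb2 : phiFejer x * (4*x^2) ≤ 1 := by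
      rw [phiFejer, if_neg hx, div_pow, div_mul_eq_mul_div, mul_pow,
        div_le_one (by positivity)]
      nlinarith [Real.sin_sq_le_one (π*x)]
    nlinarith [phiFejer_nonneg x, mul_nonneg (phiFejer_nonneg x) (by linarith : (0:ℝ) ≤ x^2 - 1),
      sq_nonneg (π - 3), Real.pi_gt_three]

lemma phiFejer_measurable : Measurable phiFejer := by
  unfold phiFejer
  apply Measurable.ite ?_ measurable_const (by fun_prop)
  simp only [Set.setOf_eq_eq_singleton]
  exact measurableSet_singleton 0

lemma phiFejer_integrable : Integrable phiFejer := by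
  apply Integrable.mono (g := fun x => π^2/2 * (1 + x^2)⁻¹)
    (integrable_inv_one_add_sq.const_mul (π^2/2))
    phiFejer_measurable.aestronglyMeasurable
  filter_upwards with x
  rw [Real.norm_eq_abs, Real.norm_eq_abs, abs_of_nonneg (phiFejer_nonneg x),
    abs_of_nonneg (by positivity)]
  exact phiFejer_le x

lemma psi_integrable : Integrable (fun x : ℝ => ((4 / π^2 * phiFejer x : ℝ) : ℂ)) :=
  (phiFejer_integrable.const_mul _).ofReal

lemma triC_integrable : Integrable triC := by
  apply triC_cont.integrable_of_hasCompactSupport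
  apply HasCompactSupport.intro (isCompact_Icc (a := (-1:ℝ)) (b := 1))
  intro t ht
  apply triC_zero
  simp only [Set.mem_Icc, not_and_or, not_le] at ht
  rcases ht with h | h
  · exact le_trans (by linarith) (neg_le_abs t)
  · exact le_trans h.le (le_abs_self t)

/-- φ(x) ≥ 1 for |x| ≤ 1/2, and the Fourier transform of φ is
φ̂(s) = (π²/4)·max(1 − |s|, 0). -/
theorem stmt_18 :
    (∀ x : ℝ, |x| ≤ 1 / 2 → 1 ≤ phiFejer x) ∧
    ∀ s : ℝ,
      (∫ y : ℝ, (phiFejer y : ℂ) * Complex.exp (2 * Real.pi * Complex.I * s * y)) =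
        ((Real.pi ^ 2 / 4 * max (1 - |s|) 0 : ℝ) : ℂ) := by
  have hπ : 0 < π := Real.pi_pos
  constructor
  · -- inequality part
    have key : ∀ x : ℝ, 0 < x → x ≤ 1/2 → 1 ≤ phiFejer x := by
      intro x hx0 hx
      rw [phiFejer, if_neg (ne_of_gt hx0)]
      have hs : 2*x ≤ Real.sin (π*x) := by
        have := Real.mul_le_sin (x := π*x) (by positivity) (by nlinarith)
        calc 2*x = 2/π * (π*x) := by field_simp
          _ ≤ Real.sin (π*x) := this
      have h1 : (1:ℝ) ≤ Real.sin (π*x) / (2*x) := by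
        rw [le_div_iff₀ (by positivity)]; linarith
      nlinarith
    intro x hx
    rcases lt_trichotomy x 0 with h | h | h
    · have heq : phiFejer x = phiFejer (-x) := by
        rw [phiFejer, phiFejer, if_neg (ne_of_lt h), if_neg (neg_ne_zero.2 (ne_of_lt h))]
        rw [mul_neg, Real.sin_neg]
        ring
      rw [heq]
      exact key (-x) (by linarith) (by rw [abs_of_neg h] at hx; linarith)
    · rw [h, phiFejer, if_pos rfl]; nlinarith [Real.pi_gt_three]
    · exact key x h (by rwa [abs_of_pos h] at hx)
  · -- Fourier part
    intro s
    have hπc : (π:ℂ) ≠ 0 := Complex.ofReal_ne_zero.2 (ne_of_gt hπ)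
    have h1 : 𝓕 triC = (fun x => ((4 / π^2 * phiFejer x : ℝ) : ℂ)) := funext fourier_triC
    have hinv : 𝓕⁻ (𝓕 triC) = triC :=
      triC_cont.fourierInv_fourier_eq triC_integrable (h1 ▸ psi_integrable)
    have step1 : (∫ y : ℝ, (phiFejer y : ℂ) * Complex.exp (2 * π * Complex.I * s * y))
        = ∫ y : ℝ, ((π^2/4 : ℝ) : ℂ) •
            (Complex.exp (↑(-2 * π * y * (-s)) * Complex.I) • (𝓕 triC) y) := by
      apply MeasureTheory.integral_congr_ae
      filter_upwards with y
      rw [h1]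
      simp only [smul_eq_mul]
      rw [show ((2:ℂ) * π * Complex.I * s * y) = ↑(-2 * π * y * (-s)) * Complex.I by
        push_cast; ring]
      push_cast
      field_simp
    rw [step1, MeasureTheory.integral_smul]
    have step2 : (∫ y : ℝ, Complex.exp (↑(-2 * π * y * (-s)) * Complex.I) • (𝓕 triC) y)
        = 𝓕⁻ (𝓕 triC) s := by
      rw [Real.fourierInv_eq_fourier_neg,
        Real.fourier_real_eq_integral_exp_smul]
    rw [step2, hinv, triC, smul_eq_mul]
    push_cast
    ring
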